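/- Let A ∈ ℝ^{n×n} and Q ∈ ℝ^{n×n}, let ρ(A) be the spectral radius of A, and suppose there exist constants c ∈ (0,1) and an integer m ≥ 1 such that ‖Q^m‖_∞ ≤ c and c · ρ(A)^m < 1. Then ‖Q^k ⊗ A^k‖_∞ → 0 as k → ∞, where ⊗ denotes the Kronecker product. -/

import Mathlib

open Kronecker

/-- Maximum absolute row sum norm. -/
noncomputable def infNorm {m : Type*} [Fintype m] (M : Matrix m m ℝ) : ℝ :=
  ⨆ i, ∑ j, |M i j|

/-- The spectral radius of a real square matrix. -/
noncomputable def specRad {n : ℕ} (M : Matrix (Fin n) (Fin n) ℝ) : ℝ :=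
  ⨆ μ : spectrum ℂ (M.map (algebraMap ℝ ℂ)), ‖(μ : ℂ)‖

open Filter

attribute [local instance] Matrix.linftyOpNormedRing Matrix.linftyOpNormedAlgebra

lemma infNorm_nonneg' {m : Type*} [Fintype m] (M : Matrix m m ℝ) : 0 ≤ infNorm M :=
  Real.iSup_nonneg fun _ => Finset.sum_nonneg fun _ _ => abs_nonneg _

lemma row_le_infNorm {m : Type*} [Fintype m] (M : Matrix m m ℝ) (i : m) :
    ∑ j, |M i j| ≤ infNorm M :=
  le_ciSup (f := fun i => ∑ j, |M i j|) (Set.Finite.bddAbove (Set.finite_range _)) i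

lemma infNorm_kron_le {n : ℕ} (hn : 0 < n) (M N : Matrix (Fin n) (Fin n) ℝ) :
    infNorm (M ⊗ₖ N) ≤ infNorm M * infNorm N := by
  haveI : Nonempty (Fin n) := Fin.pos_iff_nonempty.mp hn
  apply ciSup_le
  rintro ⟨i, i'⟩
  calc ∑ p : Fin n × Fin n, |(M ⊗ₖ N) (i, i') p|
      = (∑ j, |M i j|) * (∑ j', |N i' j'|) := by
        rw [Finset.sum_mul_sum, ← Fintype.sum_prod_type']
        refine Finset.sum_congr rfl fun p _ => ?_
        simp [Matrix.kroneckerMap_apply, abs_mul]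
    _ ≤ infNorm M * infNorm N :=
        mul_le_mul (row_le_infNorm M i) (row_le_infNorm N i')
          (Finset.sum_nonneg fun _ _ => abs_nonneg _) (infNorm_nonneg' M)

lemma infNorm_eq_norm {n : ℕ} (hn : 0 < n) (M : Matrix (Fin n) (Fin n) ℝ) :
    infNorm M = ‖M‖ := by
  haveI : Nonempty (Fin n) := Fin.pos_iff_nonempty.mp hn
  rw [Matrix.linfty_opNorm_def]
  have hrow : ∀ i, ∑ j, |M i j| = ((∑ j, ‖M i j‖₊ : NNReal) : ℝ) := by
    intro i; push_cast; simp [Real.norm_eq_abs]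
  refine le_antisymm (ciSup_le fun i => ?_) ?_
  · rw [hrow]
    exact_mod_cast Finset.le_sup (f := fun i => ∑ j, ‖M i j‖₊) (Finset.mem_univ i)
  · obtain ⟨i, _, hi⟩ := Finset.exists_mem_eq_sup Finset.univ Finset.univ_nonempty
      (fun i => ∑ j, ‖M i j‖₊)
    rw [hi, ← hrow]
    exact row_le_infNorm M i

lemma norm_mapC {n : ℕ} (M : Matrix (Fin n) (Fin n) ℝ) :
    ‖M.map (algebraMap ℝ ℂ)‖ = ‖M‖ := by
  rw [Matrix.linfty_opNorm_def, Matrix.linfty_opNorm_def]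
  congr 1; congr 1; ext i; congr 1; ext j
  simp [Matrix.map_apply]

lemma norm_Q_pow_le {n : ℕ} (hn : 0 < n) (Q : Matrix (Fin n) (Fin n) ℝ) (c : ℝ)
    (hc0 : 0 < c) (hc1 : c < 1) (m : ℕ) (hm : 1 ≤ m) (hQ' : ‖Q ^ m‖ ≤ c) (k : ℕ) :
    ‖Q ^ k‖ ≤ ((max ‖Q‖ 1) ^ m / c) * (c ^ ((1:ℝ)/m)) ^ k := by
  haveI : Nonempty (Fin n) := Fin.pos_iff_nonempty.mp hn
  set b := max ‖Q‖ 1 with hb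
  set s := c ^ ((1:ℝ)/m) with hs
  have hm0 : 0 < m := hm
  have hm0' : (0:ℝ) < m := by exact_mod_cast hm0
  have hdecomp : Q ^ k = (Q ^ m) ^ (k / m) * Q ^ (k % m) := by
    rw [← pow_mul, ← pow_add, Nat.div_add_mod]
  have h1 : ‖Q ^ k‖ ≤ ‖Q ^ m‖ ^ (k / m) * ‖Q‖ ^ (k % m) := by
    rw [hdecomp]
    exact le_trans (norm_mul_le _ _)
      (mul_le_mul (norm_pow_le _ _) (norm_pow_le _ _) (norm_nonneg _)
        (pow_nonneg (norm_nonneg _) _))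
  have h2 : ‖Q ^ m‖ ^ (k / m) ≤ c ^ (k / m) := pow_le_pow_left₀ (norm_nonneg _) hQ' _
  have h3 : ‖Q‖ ^ (k % m) ≤ b ^ m :=
    le_trans (pow_le_pow_left₀ (norm_nonneg _) (le_max_left _ _) _)
      (pow_le_pow_right₀ (le_max_right _ _) (Nat.mod_lt k hm0).le)
  have hexp : (k:ℝ)/m - 1 ≤ ((k / m : ℕ) : ℝ) := by
    have e1 : m * (k / m) + k % m = k := Nat.div_add_mod k m
    have e2 : k % m < m := Nat.mod_lt k hm0
    have e1' : (m:ℝ) * ((k/m : ℕ):ℝ) + ((k % m : ℕ):ℝ) = (k:ℝ) := by exact_mod_cast e1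
    have e2' : ((k % m : ℕ):ℝ) < (m:ℝ) := by exact_mod_cast e2
    rw [sub_le_iff_le_add, div_le_iff₀ hm0']
    nlinarith
  have h4 : c ^ (k / m) ≤ s ^ k / c := by
    have h5 : (c : ℝ) ^ ((k/m : ℕ):ℝ) ≤ c ^ ((k:ℝ)/m - 1) :=
      Real.rpow_le_rpow_of_exponent_ge hc0 hc1.le hexp
    rw [Real.rpow_natCast] at h5
    refine le_trans h5 (le_of_eq ?_)
    rw [Real.rpow_sub hc0, Real.rpow_one, hs, ← Real.rpow_natCast (c ^ ((1:ℝ)/m)) k,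
      ← Real.rpow_mul hc0.le, one_div, inv_mul_eq_div]
  calc ‖Q ^ k‖ ≤ ‖Q ^ m‖ ^ (k / m) * ‖Q‖ ^ (k % m) := h1
    _ ≤ (s ^ k / c) * b ^ m := by
        refine mul_le_mul (h2.trans h4) h3 (pow_nonneg (norm_nonneg _) _) ?_
        positivity
    _ = (b ^ m / c) * s ^ k := by ring

/-- If `‖Q^m‖_∞ ≤ c` for some `c ∈ (0,1)` and `m ≥ 1`, and `c · ρ(A)^m < 1`,
then `‖Q^k ⊗ A^k‖_∞ → 0` as `k → ∞`. -/
theorem kronecker_pow_tendsto_zero {n : ℕ} (A Q : Matrix (Fin n) (Fin n) ℝ)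
    (c : ℝ) (hc0 : 0 < c) (hc1 : c < 1) (m : ℕ) (hm : 1 ≤ m)
    (hQ : infNorm (Q ^ m) ≤ c) (hcρ : c * specRad A ^ m < 1) :
    Filter.Tendsto (fun k : ℕ => infNorm ((Q ^ k) ⊗ₖ (A ^ k)))
      Filter.atTop (nhds 0) := by
  rcases Nat.eq_zero_or_pos n with hn | hn
  · subst hn
    have h0 : ∀ k : ℕ, infNorm ((Q ^ k) ⊗ₖ (A ^ k)) = 0 := by
      intro k
      exact Real.iSup_of_isEmpty _
    simpa [h0] using (tendsto_const_nhds : Tendsto (fun _ : ℕ => (0:ℝ)) atTop (nhds 0))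
  haveI : Nonempty (Fin n) := Fin.pos_iff_nonempty.mp hn
  haveI : CompleteSpace (Matrix (Fin n) (Fin n) ℂ) := FiniteDimensional.complete ℂ _
  set B := A.map (algebraMap ℝ ℂ) with hB
  -- basic facts about the spectral radius
  have hbdd : BddAbove (Set.range fun μ : spectrum ℂ B => ‖(μ : ℂ)‖) := by
    refine ⟨‖B‖, ?_⟩
    rintro x ⟨⟨μ, hμ⟩, rfl⟩
    simpa using spectrum.norm_le_norm_of_mem hμ
  have hρ0 : 0 ≤ specRad A := by
    obtain ⟨μ, hμ⟩ := spectrum.nonempty B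
    exact le_trans (norm_nonneg (μ : ℂ)) (le_ciSup hbdd ⟨μ, hμ⟩)
  have hsr : spectralRadius ℂ B ≤ ENNReal.ofReal (specRad A) := by
    refine iSup₂_le fun μ hμ => ?_
    have h1 : ‖μ‖ ≤ specRad A := le_ciSup hbdd ⟨μ, hμ⟩
    calc (‖μ‖₊ : ENNReal) = ENNReal.ofReal ‖μ‖ := by
          exact (ofReal_norm _).symm
      _ ≤ _ := ENNReal.ofReal_le_ofReal h1
  -- choose r slightly above the spectral radius
  obtain ⟨r, hρr, hr1⟩ : ∃ r, specRad A < r ∧ c * r ^ m < 1 := by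
    have hcont : ContinuousAt (fun x : ℝ => c * x ^ m) (specRad A) := by fun_prop
    have h1 : ∀ᶠ x in nhds (specRad A), c * x ^ m < 1 := hcont (Iio_mem_nhds hcρ)
    obtain ⟨r, hr1, hρr⟩ := ((h1.filter_mono nhdsWithin_le_nhds).and
      (eventually_mem_nhdsWithin (s := Set.Ioi (specRad A)))).exists
    exact ⟨r, hρr, hr1⟩
  have hr0 : 0 < r := lt_of_le_of_lt hρ0 hρr
  -- eventual bound for ‖A^k‖ via Gelfand's formula
  have hsr' : spectralRadius ℂ B < ENNReal.ofReal r :=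
    lt_of_le_of_lt hsr ((ENNReal.ofReal_lt_ofReal_iff hr0).mpr hρr)
  have hAk : ∀ᶠ k : ℕ in atTop, ‖B ^ k‖ ≤ r ^ k := by
    have hT := spectrum.pow_nnnorm_pow_one_div_tendsto_nhds_spectralRadius B
    have h1 : ∀ᶠ k : ℕ in atTop, (‖B ^ k‖₊ : ENNReal) ^ (1 / (k : ℝ)) < ENNReal.ofReal r :=
      hT.eventually_lt_const hsr'
    filter_upwards [h1, eventually_ge_atTop 1] with k hk hk1
    have hk0 : (k : ℝ) ≠ 0 := Nat.cast_ne_zero.mpr (by omega)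
    have h2 := ENNReal.rpow_lt_rpow hk (by positivity : (0:ℝ) < (k:ℝ))
    rw [← ENNReal.rpow_mul, one_div, inv_mul_cancel₀ hk0, ENNReal.rpow_one] at h2
    rw [ENNReal.ofReal_rpow_of_pos hr0, Real.rpow_natCast] at h2
    rw [show (‖B ^ k‖₊ : ENNReal) = ENNReal.ofReal ‖B ^ k‖ from (ofReal_norm _).symm] at h2
    exact le_of_lt ((ENNReal.ofReal_lt_ofReal_iff_of_nonneg (norm_nonneg _)).mp h2)
  -- bound for ‖Q^k‖
  set b := max ‖Q‖ 1 with hb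
  set s := c ^ ((1:ℝ)/m) with hs
  have hs0 : 0 ≤ s := Real.rpow_nonneg hc0.le _
  have hQ' : ‖Q ^ m‖ ≤ c := by rw [← infNorm_eq_norm hn]; exact hQ
  have hQk : ∀ k : ℕ, ‖Q ^ k‖ ≤ (b ^ m / c) * s ^ k :=
    norm_Q_pow_le hn Q c hc0 hc1 m hm hQ'
  -- the geometric bound tends to zero
  have hsm : s ^ m = c := by
    have hm0 : (m:ℝ) ≠ 0 := by positivity
    rw [hs, ← Real.rpow_natCast (c ^ ((1:ℝ)/m)) m, ← Real.rpow_mul hc0.le, one_div,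
      inv_mul_cancel₀ hm0, Real.rpow_one]
  have hsr1 : s * r < 1 := by
    by_contra h
    push_neg at h
    have h1 : (1:ℝ) ≤ (s * r) ^ m := one_le_pow₀ h
    rw [mul_pow, hsm] at h1
    linarith
  have h0sr : 0 ≤ s * r := mul_nonneg hs0 hr0.le
  have hg : Tendsto (fun k : ℕ => (b ^ m / c) * (s * r) ^ k) atTop (nhds 0) := by
    have hg' := (tendsto_pow_atTop_nhds_zero_of_lt_one h0sr hsr1).const_mul (b ^ m / c)
    simpa using hg'
  refine squeeze_zero' (Eventually.of_forall fun k => infNorm_nonneg' _) ?_ hg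
  filter_upwards [hAk] with k hAk'
  have hBk : (A ^ k).map (algebraMap ℝ ℂ) = B ^ k := map_pow ((algebraMap ℝ ℂ).mapMatrix) A k
  have hAinf : infNorm (A ^ k) ≤ r ^ k := by
    rw [infNorm_eq_norm hn, ← norm_mapC, hBk]
    exact hAk'
  calc infNorm ((Q ^ k) ⊗ₖ (A ^ k)) ≤ infNorm (Q ^ k) * infNorm (A ^ k) := infNorm_kron_le hn _ _
    _ ≤ ((b ^ m / c) * s ^ k) * r ^ k := by
        refine mul_le_mul ?_ hAinf (infNorm_nonneg' _) ?_
        · rw [infNorm_eq_norm hn]; exact hQk k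
        · positivity
    _ = (b ^ m / c) * (s * r) ^ k := by rw [mul_pow]; ring
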